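/- Symmetry of multi-path last passage values: for any environment M : ℤ² → ℝ (max-plus algebra) and any box u ∈ ℤ⁴↑ with k ≤ min(u⁺₁ − u⁻₁ + 1, u⁺₂ − u⁻₂ + 1), the multi-point last passage value with horizontally shifted endpoints equals the one with vertically shifted endpoints: Z_M(u^k) = Z_M(û^k), where u^k = ((u⁻; u⁺ − (k−1, 0)), ..., (u⁻ + (k−1, 0); u⁺)) and û^k = ((u⁻; u⁺ − (0, k−1)), ..., (u⁻ + (0, k−1); u⁺)). -/

import Mathlib

/-- `SE x y` means `x ↘ y`: `x₁ ≤ y₁` and `x₂ ≥ y₂`. -/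
def SE (x y : ℤ × ℤ) : Prop := x.1 ≤ y.1 ∧ y.2 ≤ x.2

/-- A point of `ℤ⁴↑`: a pair `(u⁻, u⁺)` with `u⁻ ≤ u⁺` coordinatewise. -/
def IsBox (u : (ℤ × ℤ) × (ℤ × ℤ)) : Prop := u.1.1 ≤ u.2.1 ∧ u.1.2 ≤ u.2.2

/-- The pair `(u, v)` crosses horizontally: `u⁻ ↘ v⁻` and `v⁺ ↘ u⁺`. -/
def CrossH (u v : (ℤ × ℤ) × (ℤ × ℤ)) : Prop := SE u.1 v.1 ∧ SE v.2 u.2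

/-- The pair `(u, v)` crosses vertically: `v⁻ ↘ u⁻` and `u⁺ ↘ v⁺`. -/
def CrossV (u v : (ℤ × ℤ) × (ℤ × ℤ)) : Prop := SE v.1 u.1 ∧ SE u.2 v.2

/-- The rectangle in `ℤ²` associated to a box. -/
def boxSet (u : (ℤ × ℤ) × (ℤ × ℤ)) : Set (ℤ × ℤ) :=
  {p | u.1.1 ≤ p.1 ∧ p.1 ≤ u.2.1 ∧ u.1.2 ≤ p.2 ∧ p.2 ≤ u.2.2}

/-- One step of an up-right path: increase exactly one coordinate by 1. -/
def UpStep (a b : ℤ × ℤ) : Prop := b = (a.1 + 1, a.2) ∨ b = (a.1, a.2 + 1)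

/-- `IsPath p x y` : `p` is an up-right lattice path from `x` to `y`. -/
def IsPath (p : List (ℤ × ℤ)) (x y : ℤ × ℤ) : Prop :=
  p.head? = some x ∧ p.getLast? = some y ∧ p.Chain' UpStep

/-- The weight of a path in the environment `M`. -/
noncomputable def pathWeight (M : ℤ × ℤ → ℝ) (p : List (ℤ × ℤ)) : ℝ := (p.map M).sum

/-- The endpoint tuple `u^k`: the `i`-th pair (0-indexed) is
`(u⁻ + (i, 0); u⁺ - (k - 1 - i, 0))`. -/
def ukEnds (u : (ℤ × ℤ) × (ℤ × ℤ)) (k : ℕ) (i : Fin k) : (ℤ × ℤ) × (ℤ × ℤ) :=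
  ((u.1.1 + (i : ℤ), u.1.2), (u.2.1 - ((k : ℤ) - 1 - (i : ℤ)), u.2.2))

/-- The multi-point last passage value `Z_M(e)` for a `k`-tuple of endpoint pairs `e`:
the supremum over `k`-tuples of pairwise disjoint up-right paths with the prescribed
endpoints of the total weight. -/
noncomputable def ZMulti (M : ℤ × ℤ → ℝ) (k : ℕ)
    (e : Fin k → (ℤ × ℤ) × (ℤ × ℤ)) : ℝ :=
  sSup {w | ∃ π : Fin k → List (ℤ × ℤ),
    (∀ i, IsPath (π i) (e i).1 (e i).2) ∧
    (∀ i j, i ≠ j → ∀ x ∈ π i, x ∉ π j) ∧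
    w = ∑ i, pathWeight M (π i)}

/-- The endpoint tuple `û^k`, with start and end points shifted vertically. -/
def hatukEnds (u : (ℤ × ℤ) × (ℤ × ℤ)) (k : ℕ) (i : Fin k) : (ℤ × ℤ) × (ℤ × ℤ) :=
  ((u.1.1, u.1.2 + (i : ℤ)), (u.2.1, u.2.2 - ((k : ℤ) - 1 - (i : ℤ))))

namespace ZSym

/-! ### basic up-right path facts -/

lemma upstep_sum {x y : ℤ × ℤ} (h : UpStep x y) : y.1 + y.2 = x.1 + x.2 + 1 := by
  rcases h with h | h <;> subst h <;> dsimp <;> ring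

lemma upstep_fst {x y : ℤ × ℤ} (h : UpStep x y) : x.1 ≤ y.1 := by
  rcases h with h | h <;> subst h <;> dsimp <;> omega

lemma upstep_snd {x y : ℤ × ℤ} (h : UpStep x y) : x.2 ≤ y.2 := by
  rcases h with h | h <;> subst h <;> dsimp <;> omega

lemma chain_get {p : List (ℤ × ℤ)} (hc : p.Chain' UpStep) {n : ℕ} (h : n + 1 < p.length) :
    UpStep (p[n]'(by omega)) (p[n+1]'h) := by
  have := List.isChain_iff_getElem.1 hc n (by omega)
  simpa [List.get_eq_getElem] using this

lemma sum_getElem {p : List (ℤ × ℤ)} (hc : p.Chain' UpStep) :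
    ∀ (n : ℕ) (h : n < p.length),
      (p[n]'h).1 + (p[n]'h).2 = (p[0]'(by omega)).1 + (p[0]'(by omega)).2 + n := by
  intro n
  induction n with
  | zero => intro h; simp
  | succ m ih =>
    intro h
    have hs := upstep_sum (chain_get hc h)
    have hm := ih (by omega)
    push_cast at hm ⊢
    omega

lemma fst_mono {p : List (ℤ × ℤ)} (hc : p.Chain' UpStep) :
    ∀ (m n : ℕ) (hnm : n ≤ m) (h : m < p.length),
      (p[n]'(by omega)).1 ≤ (p[m]'h).1 := by
  intro m
  induction m with
  | zero =>
    intro n hn h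
    have : n = 0 := by omega
    subst this; exact le_refl _
  | succ m ih =>
    intro n hn h
    rcases Nat.eq_or_lt_of_le hn with he | hlt
    · subst he; exact le_refl _
    · exact le_trans (ih n (by omega) (by omega)) (upstep_fst (chain_get hc h))

lemma snd_mono {p : List (ℤ × ℤ)} (hc : p.Chain' UpStep) :
    ∀ (m n : ℕ) (hnm : n ≤ m) (h : m < p.length),
      (p[n]'(by omega)).2 ≤ (p[m]'h).2 := by
  intro m
  induction m with
  | zero =>
    intro n hn h
    have : n = 0 := by omega
    subst this; exact le_refl _
  | succ m ih =>
    intro n hn h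
    rcases Nat.eq_or_lt_of_le hn with he | hlt
    · subst he; exact le_refl _
    · exact le_trans (ih n (by omega) (by omega)) (upstep_snd (chain_get hc h))

lemma head?_eq {α : Type*} {l : List α} (h : 0 < l.length) : l.head? = some (l[0]'h) := by
  cases l with
  | nil => simp at h
  | cons a t => rfl

lemma getLast?_eq {α : Type*} {l : List α} (h : 0 < l.length) :
    l.getLast? = some (l[l.length - 1]'(by omega)) := by
  cases l with
  | nil => simp at h
  | cons a t =>
    rw [List.getLast?_eq_getLast (by simp), List.getLast_eq_getElem]

lemma path_ne_nil {p : List (ℤ × ℤ)} {x y : ℤ × ℤ} (hp : IsPath p x y) : p ≠ [] := by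
  intro h; rw [h] at hp; simp [IsPath] at hp

lemma path_length_pos {p : List (ℤ × ℤ)} {x y : ℤ × ℤ} (hp : IsPath p x y) :
    0 < p.length := List.length_pos_iff.2 (path_ne_nil hp)

lemma path_get_zero {p : List (ℤ × ℤ)} {x y : ℤ × ℤ} (hp : IsPath p x y) :
    p[0]'(path_length_pos hp) = x := by
  have h1 := hp.1
  rw [head?_eq (path_length_pos hp)] at h1
  exact Option.some_injective _ h1

lemma path_get_last {p : List (ℤ × ℤ)} {x y : ℤ × ℤ} (hp : IsPath p x y) :
    p[p.length - 1]'(by have := (path_length_pos hp); omega) = y := by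
  have h1 := hp.2.1
  rw [getLast?_eq (path_length_pos hp)] at h1
  exact Option.some_injective _ h1

lemma path_sum_get {p : List (ℤ × ℤ)} {x y : ℤ × ℤ} (hp : IsPath p x y)
    (n : ℕ) (h : n < p.length) :
    (p[n]'h).1 + (p[n]'h).2 = x.1 + x.2 + n := by
  have h2 := sum_getElem hp.2.2 n h
  rw [(path_get_zero hp)] at h2
  exact h2

lemma path_length_eq {p : List (ℤ × ℤ)} {x y : ℤ × ℤ} (hp : IsPath p x y) :
    (p.length : ℤ) = y.1 + y.2 - (x.1 + x.2) + 1 := by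
  have h1 := (path_sum_get hp) (p.length - 1) (by have := (path_length_pos hp); omega)
  rw [(path_get_last hp)] at h1
  have := (path_length_pos hp)
  omega

lemma path_mem_getElem {p : List (ℤ × ℤ)} {x y q : ℤ × ℤ} (hp : IsPath p x y)
    (hq : q ∈ p) :
    ∃ (n : ℕ) (h : n < p.length), p[n]'h = q ∧ (n : ℤ) = q.1 + q.2 - (x.1 + x.2) := by
  obtain ⟨n, h, he⟩ := List.mem_iff_getElem.1 hq
  refine ⟨n, h, he, ?_⟩
  have := (path_sum_get hp) n h
  rw [he] at this
  omega

set_option maxHeartbeats 1000000 in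
lemma path_fst_bounds {p : List (ℤ × ℤ)} {x y q : ℤ × ℤ} (hp : IsPath p x y)
    (hq : q ∈ p) : x.1 ≤ q.1 ∧ q.1 ≤ y.1 ∧ x.2 ≤ q.2 ∧ q.2 ≤ y.2 := by
  obtain ⟨n, h, he, -⟩ := (path_mem_getElem hp) hq
  have hL := (path_length_pos hp)
  have h0 := fst_mono hp.2.2 n 0 (by omega) h
  have h1 := fst_mono hp.2.2 (p.length - 1) n (by omega) (by omega)
  have h2 := snd_mono hp.2.2 n 0 (by omega) h
  have h3 := snd_mono hp.2.2 (p.length - 1) n (by omega) (by omega)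
  rw [(path_get_zero hp)] at h0 h2
  rw [(path_get_last hp)] at h1 h3
  rw [he] at h0 h1 h2 h3
  exact ⟨h0, h1, h2, h3⟩

lemma path_succ_mem {p : List (ℤ × ℤ)} {x y q : ℤ × ℤ} (hp : IsPath p x y)
    (hq : q ∈ p) (hlt : q.1 + q.2 < y.1 + y.2) :
    ((q.1 + 1, q.2) ∈ p) ∨ ((q.1, q.2 + 1) ∈ p) := by
  obtain ⟨n, h, he, hn⟩ := (path_mem_getElem hp) hq
  have hL := (path_length_eq hp)
  have hn1 : n + 1 < p.length := by omega
  have hs := chain_get hp.2.2 hn1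
  rw [he] at hs
  rcases hs with hs | hs
  · left; rw [← hs]; exact List.getElem_mem _
  · right; rw [← hs]; exact List.getElem_mem _

lemma path_pred_mem {p : List (ℤ × ℤ)} {x y q : ℤ × ℤ} (hp : IsPath p x y)
    (hq : q ∈ p) (hgt : x.1 + x.2 < q.1 + q.2) :
    ((q.1 - 1, q.2) ∈ p) ∨ ((q.1, q.2 - 1) ∈ p) := by
  obtain ⟨n, h, he, hn⟩ := (path_mem_getElem hp) hq
  have hpos : 1 ≤ n := by omega
  have hn1 : (n - 1) + 1 < p.length := by omega
  have hs := chain_get hp.2.2 hn1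
  have he' : p[n-1+1]'hn1 = q := by
    have : n - 1 + 1 = n := by omega
    simp_rw [this]; exact he
  rw [he'] at hs
  rcases hs with hs | hs
  · left
    have e1 : q.1 = (p[n-1]'(by omega)).1 + 1 := by rw [hs]
    have e2 : q.2 = (p[n-1]'(by omega)).2 := by rw [hs]
    have h2 : (q.1 - 1, q.2) = p[n-1]'(by omega) := by
      refine Prod.ext_iff.2 ⟨?_, ?_⟩ <;> dsimp <;> omega
    rw [h2]; exact List.getElem_mem _
  · right
    have e1 : q.1 = (p[n-1]'(by omega)).1 := by rw [hs]
    have e2 : q.2 = (p[n-1]'(by omega)).2 + 1 := by rw [hs]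
    have h2 : (q.1, q.2 - 1) = p[n-1]'(by omega) := by
      refine Prod.ext_iff.2 ⟨?_, ?_⟩ <;> dsimp <;> omega
    rw [h2]; exact List.getElem_mem _



lemma list_sum_range (n : ℕ) (f : ℕ → ℝ) :
    (((List.range n).map f)).sum = ∑ t ∈ Finset.range n, f t := by
  induction n with
  | zero => simp
  | succ m ih => rw [List.range_succ, Finset.sum_range_succ]; simp [ih]

lemma tri {β : Type*} [AddCommMonoid β] (n : ℕ) (f : ℕ → ℕ → β) :
    ∑ x ∈ Finset.range n, ∑ y ∈ Finset.range (n - 1 - x), f x y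
      = ∑ x ∈ Finset.range n, ∑ y ∈ Finset.range (n - 1 - x), f y x := by
  rw [Finset.sum_sigma', Finset.sum_sigma']
  refine Finset.sum_bij' (fun p _ => (⟨p.2, p.1⟩ : Σ _x : ℕ, ℕ))
    (fun p _ => (⟨p.2, p.1⟩ : Σ _x : ℕ, ℕ)) ?_ ?_ ?_ ?_ ?_
  · intro p hp
    simp only [Finset.mem_sigma, Finset.mem_range] at hp ⊢
    omega
  · intro p hp
    simp only [Finset.mem_sigma, Finset.mem_range] at hp ⊢
    omega
  · intro p _; rfl
  · intro p _; rfl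
  · intro p _; rfl

lemma mid {p : List (ℤ × ℤ)} {X1 X2 Y1 Y2 : ℤ} (hp : IsPath p (X1, X2) (Y1, Y2))
    (m n : ℕ)
    (hD : ((X1, X2 + (m : ℤ)) : ℤ × ℤ) ∈ p)
    (hD' : ((Y1, Y2 - (n : ℤ)) : ℤ × ℤ) ∈ p)
    (hmn : (m : ℤ) + (n : ℤ) ≤ Y1 + Y2 - (X1 + X2)) :
    ∃ C : List (ℤ × ℤ),
      p = (List.range m).map (fun t : ℕ => (X1, X2 + (t : ℤ))) ++ C
          ++ (List.range n).map (fun t : ℕ => (Y1, Y2 - (n : ℤ) + 1 + (t : ℤ))) ∧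
      C.head? = some (X1, X2 + (m : ℤ)) ∧
      C.getLast? = some (Y1, Y2 - (n : ℤ)) ∧
      C.Chain' UpStep ∧
      (∀ q ∈ C, X1 + X2 + (m : ℤ) ≤ q.1 + q.2 ∧ q.1 + q.2 ≤ Y1 + Y2 - (n : ℤ)) := by
  have hL := path_length_eq hp
  dsimp at hL
  have hmL : m + n + 1 ≤ p.length := by omega
  -- index of D
  obtain ⟨nD, hnD, heD, hvD⟩ := path_mem_getElem hp hD
  have hnDm : m = nD := by dsimp at hvD; omega
  subst hnDm
  -- index of D'
  obtain ⟨nE, hnE, heE, hvE⟩ := path_mem_getElem hp hD'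
  have hnEv : p.length - 1 - n = nE := by dsimp at hvE; omega
  subst hnEv
  set L := p.length with hLdef
  refine ⟨(p.drop m).take (L - m - n), ?_, ?_, ?_, ?_, ?_⟩
  · -- decomposition
    have e1 : (p.drop m).take (L - m - n) ++ p.drop (L - n) = p.drop m := by
      have h2 := List.take_append_drop (L - m - n) (p.drop m)
      rw [List.drop_drop] at h2
      have h3 : m + (L - m - n) = L - n := by omega
      rw [h3] at h2
      exact h2
    have hdec : p = p.take m ++ ((p.drop m).take (L - m - n) ++ p.drop (L - n)) := by
      rw [e1, List.take_append_drop]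
    have htake : p.take m = (List.range m).map (fun t : ℕ => ((X1 : ℤ), X2 + (t : ℤ))) := by
      apply List.ext_getElem
      · simp only [List.length_take, List.length_map, List.length_range]; omega
      · intro t h1 h2
        simp only [List.length_take] at h1
        have ht : t < m := by omega
        have htL : t < L := by omega
        rw [List.getElem_take, List.getElem_map, List.getElem_range]
        have hf1 : (p[t]'htL).1 ≤ X1 := by
          have h5 := fst_mono hp.2.2 m t (by omega) hnD
          rw [heD] at h5; exact h5
        have hf2 : X1 ≤ (p[t]'htL).1 := by
          have h5 := fst_mono hp.2.2 t 0 (by omega) htL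
          rw [path_get_zero hp] at h5; exact h5
        have hsum := path_sum_get hp t htL
        dsimp at hsum
        refine Prod.ext_iff.2 ⟨le_antisymm hf1 hf2, by omega⟩
    have hdrop : p.drop (L - n) = (List.range n).map
        (fun t : ℕ => ((Y1 : ℤ), Y2 - (n : ℤ) + 1 + (t : ℤ))) := by
      apply List.ext_getElem
      · simp only [List.length_drop, List.length_map, List.length_range]; omega
      · intro t h1 h2
        simp only [List.length_drop] at h1
        have ht : t < n := by omega
        have htL : L - n + t < L := by omega
        rw [List.getElem_drop, List.getElem_map, List.getElem_range]
        have hf1 : (p[L - n + t]'htL).1 ≤ Y1 := by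
          have h5 := fst_mono hp.2.2 (L - 1) (L - n + t) (by omega) (by omega)
          rw [path_get_last hp] at h5; exact h5
        have hf2 : Y1 ≤ (p[L - n + t]'htL).1 := by
          have h5 := fst_mono hp.2.2 (L - n + t) (L - 1 - n) (by omega) htL
          rw [heE] at h5; exact h5
        have hsum := path_sum_get hp (L - n + t) htL
        dsimp at hsum
        have hcast : ((L - n + t : ℕ) : ℤ) = (L : ℤ) - (n : ℤ) + (t : ℤ) := by omega
        refine Prod.ext_iff.2 ⟨le_antisymm hf1 hf2, by omega⟩
    rw [← htake, ← hdrop, List.append_assoc]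
    exact hdec
  · -- head?
    have hlen : 0 < ((p.drop m).take (L - m - n)).length := by
      simp only [List.length_take, List.length_drop]; omega
    rw [head?_eq hlen]
    congr 1
    rw [List.getElem_take, List.getElem_drop]
    have h3 : m + 0 = m := by omega
    simp_rw [h3]
    exact heD
  · -- getLast?
    have hlen : 0 < ((p.drop m).take (L - m - n)).length := by
      simp only [List.length_take, List.length_drop]; omega
    rw [getLast?_eq hlen]
    congr 1
    rw [List.getElem_take, List.getElem_drop]
    have h4 : m + (((p.drop m).take (L - m - n)).length - 1) = L - 1 - n := by
      simp only [List.length_take, List.length_drop]; omega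
    simp_rw [h4]
    exact heE
  · -- chain
    exact hp.2.2.infix
      ((List.take_prefix (L - m - n) (p.drop m)).isInfix.trans
        (List.drop_suffix m p).isInfix)
  · -- bounds
    intro q hq
    obtain ⟨t, ht, he⟩ := List.mem_iff_getElem.1 hq
    simp only [List.length_take, List.length_drop] at ht
    rw [List.getElem_take, List.getElem_drop] at he
    have htL : m + t < L := by omega
    have hsum := path_sum_get hp (m + t) htL
    rw [he] at hsum
    dsimp at hsum
    have hcast : ((m + t : ℕ) : ℤ) = (m : ℤ) + (t : ℤ) := by omega
    exact ⟨by omega, by omega⟩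



def row (a0 b0 : ℤ) (n : ℕ) : List (ℤ × ℤ) :=
  (List.range n).map (fun t : ℕ => (a0 + (t : ℤ), b0))

lemma row_length (a0 b0 : ℤ) (n : ℕ) : (row a0 b0 n).length = n := by simp [row]

lemma row_chain (a0 b0 : ℤ) (n : ℕ) : (row a0 b0 n).Chain' UpStep := by
  rw [List.Chain', List.isChain_iff_getElem]
  intro t ht
  simp only [row, List.length_map, List.length_range] at ht
  simp only [List.get_eq_getElem, row, List.getElem_map, List.getElem_range]
  left
  refine Prod.ext_iff.2 ⟨?_, rfl⟩
  dsimp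
  push_cast
  ring

lemma row_head (a0 b0 : ℤ) {n : ℕ} (h : 0 < n) : (row a0 b0 n).head? = some (a0, b0) := by
  rw [head?_eq (by rw [row_length]; omega)]
  congr 1
  simp [row]

lemma row_last (a0 b0 : ℤ) {n : ℕ} (h : 0 < n) :
    (row a0 b0 n).getLast? = some (a0 + (n : ℤ) - 1, b0) := by
  rw [getLast?_eq (by rw [row_length]; omega)]
  congr 1
  simp only [row, List.getElem_map, List.getElem_range, List.length_map, List.length_range]
  refine Prod.ext_iff.2 ⟨?_, rfl⟩
  dsimp
  omega

lemma row_mem {a0 b0 : ℤ} {n : ℕ} {q : ℤ × ℤ} (hq : q ∈ row a0 b0 n) :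
    ∃ t : ℕ, t < n ∧ (a0 + (t : ℤ), b0) = q := by
  simp only [row, List.mem_map, List.mem_range] at hq
  obtain ⟨t, ht, he⟩ := hq
  exact ⟨t, ht, he⟩

lemma row_zero (a0 b0 : ℤ) : row a0 b0 0 = [] := rfl

lemma row_weight (M : ℤ × ℤ → ℝ) (a0 b0 : ℤ) (n : ℕ) :
    pathWeight M (row a0 b0 n) = ∑ t ∈ Finset.range n, M (a0 + (t : ℤ), b0) := by
  simp only [pathWeight, row, List.map_map]
  rw [list_sum_range]
  simp

set_option maxHeartbeats 2000000 in
lemma key (M : ℤ × ℤ → ℝ) (a b c d : ℤ) (k : ℕ)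
    (hc : a + (k : ℤ) - 1 ≤ c) (hd : b + (k : ℤ) - 1 ≤ d)
    (π : Fin k → List (ℤ × ℤ))
    (hpath : ∀ i : Fin k, IsPath (π i) (a + (i.val : ℤ), b)
      (c - ((k : ℤ) - 1 - (i.val : ℤ)), d))
    (hdisj : ∀ i j, i ≠ j → ∀ x ∈ π i, x ∉ π j) :
    ∃ ρ : Fin k → List (ℤ × ℤ),
      (∀ i : Fin k, IsPath (ρ i) (a, b + (i.val : ℤ))
        (c, d - ((k : ℤ) - 1 - (i.val : ℤ)))) ∧
      (∀ i j, i ≠ j → ∀ x ∈ ρ i, x ∉ ρ j) ∧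
      ∑ i, pathWeight M (ρ i) = ∑ i, pathWeight M (π i) := by
  rcases Nat.eq_zero_or_pos k with hk0 | hk1
  · subst hk0
    exact ⟨π, fun i => i.elim0, hdisj, rfl⟩
  have hpath2 : ∀ (j : ℕ) (hj : j < k), IsPath (π ⟨j, hj⟩) (a + (j : ℤ), b)
      (c - ((k : ℤ) - 1 - (j : ℤ)), d) := fun j hj => hpath ⟨j, hj⟩
  -- entry hooks
  have H1 : ∀ (j i : ℕ) (h : i + j + 1 ≤ k),
      ((a + (i : ℤ), b + (j : ℤ)) : ℤ × ℤ) ∈ π ⟨i, by omega⟩ := by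
    intro j
    induction j with
    | zero =>
      intro i h
      have hp := hpath2 i (by omega)
      have hx : ((a + (i : ℤ), b + ((0 : ℕ) : ℤ)) : ℤ × ℤ) = (a + (i : ℤ), b) := by
        norm_num
      rw [hx]
      apply List.mem_of_mem_head?
      rw [hp.1]
      simp
    | succ j ih =>
      intro i h
      have hmem := ih i (by omega)
      have hp := hpath2 i (by omega)
      have hstep := path_succ_mem hp hmem (by dsimp; omega)
      rcases hstep with hx | hy
      · exfalso
        have hmem2 := ih (i + 1) (by omega)
        have heq : ((a + ((i + 1 : ℕ) : ℤ), b + (j : ℤ)) : ℤ × ℤ)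
            = ((a + (i : ℤ), b + (j : ℤ)).1 + 1, (a + (i : ℤ), b + (j : ℤ)).2) := by
          refine Prod.ext_iff.2 ⟨?_, rfl⟩
          dsimp
          push_cast
          ring
        rw [heq] at hmem2
        exact hdisj ⟨i + 1, by omega⟩ ⟨i, by omega⟩
          (by simp [Fin.ext_iff]) _ hmem2 hx
      · have heq : ((a + (i : ℤ), b + ((j + 1 : ℕ) : ℤ)) : ℤ × ℤ)
            = ((a + (i : ℤ), b + (j : ℤ)).1, (a + (i : ℤ), b + (j : ℤ)).2 + 1) := by
          refine Prod.ext_iff.2 ⟨rfl, ?_⟩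
          dsimp
          push_cast
          ring
        rw [heq]
        exact hy
  -- exit hooks
  have H2 : ∀ (j i : ℕ) (hji : j ≤ i) (hik : i < k),
      ((c - ((k : ℤ) - 1 - (i : ℤ)), d - (j : ℤ)) : ℤ × ℤ) ∈ π ⟨i, hik⟩ := by
    intro j
    induction j with
    | zero =>
      intro i hji hik
      have hp := hpath2 i hik
      have hx : ((c - ((k : ℤ) - 1 - (i : ℤ)), d - ((0 : ℕ) : ℤ)) : ℤ × ℤ)
          = (c - ((k : ℤ) - 1 - (i : ℤ)), d) := by norm_num
      rw [hx]
      apply List.mem_of_mem_getLast?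
      rw [hp.2.1]
      simp
    | succ j ih =>
      intro i hji hik
      have hmem := ih i (by omega) hik
      have hp := hpath2 i hik
      have hstep := path_pred_mem hp hmem (by dsimp; omega)
      rcases hstep with hx | hy
      · exfalso
        have hmem2 := ih (i - 1) (by omega) (by omega)
        have heq : ((c - ((k : ℤ) - 1 - ((i - 1 : ℕ) : ℤ)), d - (j : ℤ)) : ℤ × ℤ)
            = ((c - ((k : ℤ) - 1 - (i : ℤ)), d - (j : ℤ)).1 - 1,
               (c - ((k : ℤ) - 1 - (i : ℤ)), d - (j : ℤ)).2) := by
          refine Prod.ext_iff.2 ⟨?_, rfl⟩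
          dsimp
          omega
        rw [heq] at hmem2
        exact hdisj ⟨i - 1, by omega⟩ ⟨i, hik⟩ (by simp [Fin.ext_iff]; omega) _ hmem2 hx
      · have heq : ((c - ((k : ℤ) - 1 - (i : ℤ)), d - ((j + 1 : ℕ) : ℤ)) : ℤ × ℤ)
            = ((c - ((k : ℤ) - 1 - (i : ℤ)), d - (j : ℤ)).1,
               (c - ((k : ℤ) - 1 - (i : ℤ)), d - (j : ℤ)).2 - 1) := by
          refine Prod.ext_iff.2 ⟨rfl, ?_⟩
          dsimp
          push_cast
          ring
        rw [heq]
        exact hy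
  -- apply mid to each reversed path
  have hmid : ∀ i : Fin k, ∃ C : List (ℤ × ℤ),
      π ⟨k - 1 - i.val, by omega⟩
        = (List.range i.val).map
            (fun t : ℕ => (a + ((k - 1 - i.val : ℕ) : ℤ), b + (t : ℤ))) ++ C
          ++ (List.range (k - 1 - i.val)).map
            (fun t : ℕ => (c - ((k : ℤ) - 1 - ((k - 1 - i.val : ℕ) : ℤ)),
              d - ((k - 1 - i.val : ℕ) : ℤ) + 1 + (t : ℤ))) ∧
      C.head? = some (a + ((k - 1 - i.val : ℕ) : ℤ), b + (i.val : ℤ)) ∧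
      C.getLast? = some (c - ((k : ℤ) - 1 - ((k - 1 - i.val : ℕ) : ℤ)),
        d - ((k - 1 - i.val : ℕ) : ℤ)) ∧
      C.Chain' UpStep ∧
      (∀ q ∈ C, (a + ((k - 1 - i.val : ℕ) : ℤ)) + b + (i.val : ℤ) ≤ q.1 + q.2 ∧
        q.1 + q.2 ≤ (c - ((k : ℤ) - 1 - ((k - 1 - i.val : ℕ) : ℤ))) + d
          - ((k - 1 - i.val : ℕ) : ℤ)) := by
    intro i
    have hilt := i.isLt
    exact mid (hpath2 (k - 1 - i.val) (by omega)) i.val (k - 1 - i.val)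
      (H1 i.val (k - 1 - i.val) (by omega))
      (H2 (k - 1 - i.val) (k - 1 - i.val) le_rfl (by omega))
      (by omega)
  choose C hC1 hC2 hC3 hC4 hC5 using hmid
  refine ⟨fun i => row a (b + (i.val : ℤ)) (k - 1 - i.val) ++ C i
    ++ row (c - (i.val : ℤ) + 1) (d - ((k - 1 - i.val : ℕ) : ℤ)) i.val, ?_, ?_, ?_⟩
  · -- IsPath
    intro i
    have hilt := i.isLt
    refine ⟨?_, ?_, ?_⟩
    · -- head?
      rw [List.head?_append, List.head?_append]
      rcases Nat.eq_zero_or_pos (k - 1 - i.val) with h0 | h0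
      · rw [h0, row_zero]
        simp only [List.head?_nil, Option.none_or]
        rw [hC2 i, h0]
        rw [show ∀ (z : ℤ × ℤ) (o : Option (ℤ × ℤ)), (some z).or o = some z from fun _ _ => rfl]
        congr 1
        refine Prod.ext_iff.2 ⟨?_, rfl⟩
        norm_num
      · rw [row_head _ _ h0]
        simp
    · -- getLast?
      rw [List.getLast?_append, List.getLast?_append]
      rcases Nat.eq_zero_or_pos i.val with h0 | h0
      · rw [h0, row_zero]
        simp only [List.getLast?_nil, Option.none_or]
        rw [hC3 i]
        rw [show ∀ (z : ℤ × ℤ) (o : Option (ℤ × ℤ)), (some z).or o = some z from fun _ _ => rfl]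
        congr 1
        refine Prod.ext_iff.2 ⟨?_, ?_⟩ <;> dsimp <;> omega
      · rw [row_last _ _ h0]
        rw [show ∀ (z : ℤ × ℤ) (o : Option (ℤ × ℤ)), (some z).or o = some z from fun _ _ => rfl]
        congr 1
        refine Prod.ext_iff.2 ⟨?_, ?_⟩ <;> dsimp <;> omega
    · -- chain
      rw [List.Chain', List.isChain_append, List.isChain_append]
      refine ⟨⟨row_chain _ _ _, hC4 i, ?_⟩, row_chain _ _ _, ?_⟩
      · intro x hx y hy
        rcases Nat.eq_zero_or_pos (k - 1 - i.val) with h0 | h0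
        · rw [h0, row_zero] at hx
          simp at hx
        · rw [row_last _ _ h0] at hx
          rw [hC2 i] at hy
          simp only [Option.mem_def, Option.some_inj] at hx hy
          subst hx
          subst hy
          left
          refine Prod.ext_iff.2 ⟨?_, ?_⟩ <;> dsimp <;> ring
      · intro x hx y hy
        rcases Nat.eq_zero_or_pos i.val with h0 | h0
        · rw [h0, row_zero] at hy
          simp at hy
        · rw [row_head _ _ h0] at hy
          rw [List.getLast?_append, hC3 i] at hx
          rw [show ∀ (z : ℤ × ℤ) (o : Option (ℤ × ℤ)), (some z).or o = some z from fun _ _ => rfl] at hx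
          simp only [Option.mem_def, Option.some_inj] at hx hy
          subst hx
          subst hy
          left
          refine Prod.ext_iff.2 ⟨?_, ?_⟩ <;> dsimp <;> omega
  · -- disjointness
    intro i j hne q hq hq'
    have hilt := i.isLt
    have hjlt := j.isLt
    have hvne : i.val ≠ j.val := fun h => hne (Fin.ext h)
    simp only [List.mem_append] at hq hq'
    have hboundpre : ∀ (i' : Fin k) (q' : ℤ × ℤ),
        q' ∈ row a (b + (i'.val : ℤ)) (k - 1 - i'.val) →
        q'.2 = b + (i'.val : ℤ) ∧ q'.1 + q'.2 ≤ a + b + (k : ℤ) - 2 := by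
      intro i' q' hq'
      obtain ⟨t, ht, he⟩ := row_mem hq'
      have := i'.isLt
      rw [← he]
      constructor
      · rfl
      · dsimp; omega
    have hboundpost : ∀ (i' : Fin k) (q' : ℤ × ℤ),
        q' ∈ row (c - (i'.val : ℤ) + 1) (d - ((k - 1 - i'.val : ℕ) : ℤ)) i'.val →
        q'.2 = d - ((k - 1 - i'.val : ℕ) : ℤ) ∧ c + d - (k : ℤ) + 2 ≤ q'.1 + q'.2 := by
      intro i' q' hq'
      obtain ⟨t, ht, he⟩ := row_mem hq'
      have := i'.isLt
      rw [← he]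
      constructor
      · rfl
      · dsimp; omega
    have hboundC : ∀ (i' : Fin k) (q' : ℤ × ℤ), q' ∈ C i' →
        a + b + (k : ℤ) - 1 ≤ q'.1 + q'.2 ∧ q'.1 + q'.2 ≤ c + d - (k : ℤ) + 1 := by
      intro i' q' hq'
      have h5 := hC5 i' q' hq'
      have := i'.isLt
      constructor <;> omega
    have hCsub : ∀ (i' : Fin k) (q' : ℤ × ℤ), q' ∈ C i' →
        q' ∈ π ⟨k - 1 - i'.val, by omega⟩ := by
      intro i' q' hq'
      rw [hC1 i']
      exact List.mem_append.2 (Or.inl (List.mem_append.2 (Or.inr hq')))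
    rcases hq with (h1 | h1) | h1 <;> rcases hq' with (h2 | h2) | h2
    · -- pre pre
      have b1 := hboundpre i q h1
      have b2 := hboundpre j q h2
      exact hvne (by omega)
    · -- pre C
      have b1 := hboundpre i q h1
      have b2 := hboundC j q h2
      omega
    · -- pre post
      have b1 := hboundpre i q h1
      have b2 := hboundpost j q h2
      omega
    · -- C pre
      have b1 := hboundC i q h1
      have b2 := hboundpre j q h2
      omega
    · -- C C
      have hfne : (⟨k - 1 - i.val, by omega⟩ : Fin k) ≠ ⟨k - 1 - j.val, by omega⟩ := by
        simp only [ne_eq, Fin.ext_iff]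
        omega
      exact hdisj _ _ hfne q (hCsub i q h1) (hCsub j q h2)
    · -- C post
      have b1 := hboundC i q h1
      have b2 := hboundpost j q h2
      omega
    · -- post pre
      have b1 := hboundpost i q h1
      have b2 := hboundpre j q h2
      omega
    · -- post C
      have b1 := hboundpost i q h1
      have b2 := hboundC j q h2
      omega
    · -- post post
      have b1 := hboundpost i q h1
      have b2 := hboundpost j q h2
      exact hvne (by omega)
  · -- weights
    have hwρ : ∀ i : Fin k,
        pathWeight M (row a (b + (i.val : ℤ)) (k - 1 - i.val) ++ C i
          ++ row (c - (i.val : ℤ) + 1) (d - ((k - 1 - i.val : ℕ) : ℤ)) i.val)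
        = (∑ t ∈ Finset.range (k - 1 - i.val), M (a + (t : ℤ), b + (i.val : ℤ)))
          + pathWeight M (C i)
          + (∑ t ∈ Finset.range i.val,
              M (c - (i.val : ℤ) + 1 + (t : ℤ), d - ((k - 1 - i.val : ℕ) : ℤ))) := by
      intro i
      simp only [pathWeight, List.map_append, List.sum_append]
      rw [show ((row a (b + (i.val : ℤ)) (k - 1 - i.val)).map M).sum
            = pathWeight M (row a (b + (i.val : ℤ)) (k - 1 - i.val)) from rfl,
          show ((row (c - (i.val : ℤ) + 1) (d - ((k - 1 - i.val : ℕ) : ℤ)) i.val).map M).sum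
            = pathWeight M (row (c - (i.val : ℤ) + 1) (d - ((k - 1 - i.val : ℕ) : ℤ)) i.val)
            from rfl,
          row_weight, row_weight]
    have hwπ : ∀ i : Fin k,
        pathWeight M (π ⟨k - 1 - i.val, by omega⟩)
        = (∑ t ∈ Finset.range i.val, M (a + ((k - 1 - i.val : ℕ) : ℤ), b + (t : ℤ)))
          + pathWeight M (C i)
          + (∑ t ∈ Finset.range (k - 1 - i.val),
              M (c - ((k : ℤ) - 1 - ((k - 1 - i.val : ℕ) : ℤ)),
                d - ((k - 1 - i.val : ℕ) : ℤ) + 1 + (t : ℤ))) := by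
      intro i
      rw [hC1 i]
      simp only [pathWeight, List.map_append, List.sum_append, List.map_map]
      rw [list_sum_range, list_sum_range]
      simp only [Function.comp_apply]
    have hrev : ∑ i, pathWeight M (π i)
        = ∑ i : Fin k, pathWeight M (π ⟨k - 1 - i.val, by omega⟩) := by
      rw [← Equiv.sum_comp (Fin.revPerm : Equiv.Perm (Fin k))
        (fun j => pathWeight M (π j))]
      apply Finset.sum_congr rfl
      intro i _
      have h7 : (Fin.revPerm i : Fin k) = ⟨k - 1 - i.val, by omega⟩ := by
        apply Fin.ext
        simp [Fin.val_rev]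
        omega
      rw [h7]
    rw [Finset.sum_congr rfl (fun i _ => hwρ i), hrev,
      Finset.sum_congr rfl (fun i _ => hwπ i)]
    rw [Finset.sum_add_distrib, Finset.sum_add_distrib,
      Finset.sum_add_distrib, Finset.sum_add_distrib]
    have hA : (∑ i : Fin k, ∑ t ∈ Finset.range (k - 1 - i.val), M (a + (t : ℤ), b + (i.val : ℤ)))
        = ∑ i : Fin k, ∑ t ∈ Finset.range i.val, M (a + ((k - 1 - i.val : ℕ) : ℤ), b + (t : ℤ)) := by
      rw [Fin.sum_univ_eq_sum_range
            (fun x => ∑ t ∈ Finset.range (k - 1 - x), M (a + (t : ℤ), b + (x : ℤ))) k,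
          Fin.sum_univ_eq_sum_range
            (fun x => ∑ t ∈ Finset.range x, M (a + ((k - 1 - x : ℕ) : ℤ), b + (t : ℤ))) k,
          ← Finset.sum_range_reflect
            (fun x => ∑ t ∈ Finset.range x, M (a + ((k - 1 - x : ℕ) : ℤ), b + (t : ℤ))) k]
      refine (tri k (fun x t => M (a + (t : ℤ), b + (x : ℤ)))).trans ?_
      apply Finset.sum_congr rfl
      intro x hx
      simp only [Finset.mem_range] at hx
      have h6 : k - 1 - (k - 1 - x) = x := by omega
      rw [h6]
    have hB : (∑ i : Fin k, ∑ t ∈ Finset.range i.val,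
          M (c - (i.val : ℤ) + 1 + (t : ℤ), d - ((k - 1 - i.val : ℕ) : ℤ)))
        = ∑ i : Fin k, ∑ t ∈ Finset.range (k - 1 - i.val),
            M (c - ((k : ℤ) - 1 - ((k - 1 - i.val : ℕ) : ℤ)),
              d - ((k - 1 - i.val : ℕ) : ℤ) + 1 + (t : ℤ)) := by
      have hpostC : ∀ i : Fin k,
          (∑ t ∈ Finset.range i.val,
            M (c - (i.val : ℤ) + 1 + (t : ℤ), d - ((k - 1 - i.val : ℕ) : ℤ)))
          = ∑ t ∈ Finset.range i.val, M (c - (t : ℤ), d - ((k - 1 - i.val : ℕ) : ℤ)) := by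
        intro i
        rw [← Finset.sum_range_reflect]
        apply Finset.sum_congr rfl
        intro t ht
        simp only [Finset.mem_range] at ht
        congr 1
        refine Prod.ext_iff.2 ⟨?_, rfl⟩
        dsimp
        omega
      have hdropC : ∀ i : Fin k,
          (∑ t ∈ Finset.range (k - 1 - i.val),
            M (c - ((k : ℤ) - 1 - ((k - 1 - i.val : ℕ) : ℤ)),
              d - ((k - 1 - i.val : ℕ) : ℤ) + 1 + (t : ℤ)))
          = ∑ t ∈ Finset.range (k - 1 - i.val),
              M (c - (i.val : ℤ), d - (t : ℤ)) := by
        intro i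
        have hilt := i.isLt
        rw [← Finset.sum_range_reflect]
        apply Finset.sum_congr rfl
        intro t ht
        simp only [Finset.mem_range] at ht
        congr 1
        refine Prod.ext_iff.2 ⟨?_, ?_⟩ <;> dsimp <;> omega
      rw [Finset.sum_congr rfl (fun i _ => hpostC i),
        Finset.sum_congr rfl (fun i _ => hdropC i)]
      rw [Fin.sum_univ_eq_sum_range
          (fun x => ∑ t ∈ Finset.range x, M (c - (t : ℤ), d - ((k - 1 - x : ℕ) : ℤ))) k,
        Fin.sum_univ_eq_sum_range
          (fun x => ∑ t ∈ Finset.range (k - 1 - x), M (c - (x : ℤ), d - (t : ℤ))) k,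
        ← Finset.sum_range_reflect
          (fun x => ∑ t ∈ Finset.range x, M (c - (t : ℤ), d - ((k - 1 - x : ℕ) : ℤ))) k]
      refine Eq.trans ?_ (tri k (fun x t => M (c - (t : ℤ), d - (x : ℤ))))
      apply Finset.sum_congr rfl
      intro x hx
      simp only [Finset.mem_range] at hx
      have h6 : k - 1 - (k - 1 - x) = x := by omega
      rw [h6]
    linear_combination hA + hB


def ZSet (M : ℤ × ℤ → ℝ) (k : ℕ) (e : Fin k → (ℤ × ℤ) × (ℤ × ℤ)) : Set ℝ :=
  {w | ∃ π : Fin k → List (ℤ × ℤ),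
    (∀ i, IsPath (π i) (e i).1 (e i).2) ∧
    (∀ i j, i ≠ j → ∀ x ∈ π i, x ∉ π j) ∧
    w = ∑ i, pathWeight M (π i)}

lemma zmulti_eq (M : ℤ × ℤ → ℝ) (k : ℕ) (e : Fin k → (ℤ × ℤ) × (ℤ × ℤ)) :
    ZMulti M k e = sSup (ZSet M k e) := rfl

lemma upstep_swap {x y : ℤ × ℤ} (h : UpStep x y) : UpStep (x.2, x.1) (y.2, y.1) := by
  rcases h with h | h <;> subst h
  · right; rfl
  · left; rfl

lemma swap_sub (M : ℤ × ℤ → ℝ) (k : ℕ) (e : Fin k → (ℤ × ℤ) × (ℤ × ℤ)) :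
    ZSet M k e ⊆ ZSet (fun q => M (q.2, q.1)) k
      (fun i => (((e i).1.2, (e i).1.1), ((e i).2.2, (e i).2.1))) := by
  rintro w ⟨π, hpath, hdisj, rfl⟩
  refine ⟨fun i => (π i).map (fun q => (q.2, q.1)), ?_, ?_, ?_⟩
  · intro i
    obtain ⟨h1, h2, h3⟩ := hpath i
    refine ⟨?_, ?_, ?_⟩
    · rw [List.head?_map, h1]; rfl
    · rw [List.getLast?_map, h2]; rfl
    · rw [List.Chain', List.isChain_map]
      exact h3.imp (fun a b h => upstep_swap h)
  · intro i j hij x hx hx'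
    simp only [List.mem_map] at hx hx'
    obtain ⟨q, hq, hqe⟩ := hx
    obtain ⟨q', hq', hqe'⟩ := hx'
    have : q = q' := by
      rw [← hqe'] at hqe
      exact Prod.ext_iff.2 ⟨congrArg Prod.snd hqe, congrArg Prod.fst hqe⟩
    subst this
    exact hdisj i j hij q hq hq'
  · apply Finset.sum_congr rfl
    intro i _
    simp only [pathWeight, List.map_map]
    rfl

lemma uk_sub_hatuk (M : ℤ × ℤ → ℝ) (u : (ℤ × ℤ) × (ℤ × ℤ)) (k : ℕ)
    (hk : (k : ℤ) ≤ min (u.2.1 - u.1.1 + 1) (u.2.2 - u.1.2 + 1)) :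
    ZSet M k (ukEnds u k) ⊆ ZSet M k (hatukEnds u k) := by
  rintro w ⟨π, hpath, hdisj, rfl⟩
  have hm := le_min_iff.1 hk
  obtain ⟨ρ, hρ, hρd, hw⟩ := key M u.1.1 u.1.2 u.2.1 u.2.2 k
    (by omega) (by omega) π (fun i => hpath i) hdisj
  exact ⟨ρ, fun i => hρ i, hρd, hw.symm⟩

end ZSym

/-- `Z_M(u^k) = Z_M(û^k)`: multi-point last passage values with horizontally shifted
endpoints equal those with vertically shifted endpoints. -/
theorem ZMulti_uk_eq_hatuk (M : ℤ × ℤ → ℝ)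
    (u : (ℤ × ℤ) × (ℤ × ℤ)) (hu : IsBox u) (k : ℕ)
    (hk : (k : ℤ) ≤ min (u.2.1 - u.1.1 + 1) (u.2.2 - u.1.2 + 1)) :
    ZMulti M k (ukEnds u k) = ZMulti M k (hatukEnds u k) := by
  have h1 : ZSym.ZSet M k (ukEnds u k) ⊆ ZSym.ZSet M k (hatukEnds u k) :=
    ZSym.uk_sub_hatuk M u k hk
  have h2 : ZSym.ZSet M k (hatukEnds u k) ⊆ ZSym.ZSet M k (ukEnds u k) := by
    set M' : ℤ × ℤ → ℝ := fun q => M (q.2, q.1) with hM'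
    set u' : (ℤ × ℤ) × (ℤ × ℤ) := ((u.1.2, u.1.1), (u.2.2, u.2.1)) with hu'
    have e1 : ZSym.ZSet M k (hatukEnds u k) ⊆ ZSym.ZSet M' k (ukEnds u' k) := by
      have h := ZSym.swap_sub M k (hatukEnds u k)
      have he : (fun i : Fin k => (((hatukEnds u k i).1.2, (hatukEnds u k i).1.1),
          ((hatukEnds u k i).2.2, (hatukEnds u k i).2.1))) = ukEnds u' k := by
        funext i; rfl
      rw [he] at h
      exact h
    have e2 : ZSym.ZSet M' k (ukEnds u' k) ⊆ ZSym.ZSet M' k (hatukEnds u' k) :=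
      ZSym.uk_sub_hatuk M' u' k (by rw [hu']; dsimp; omega)
    have e3 : ZSym.ZSet M' k (hatukEnds u' k) ⊆ ZSym.ZSet M k (ukEnds u k) := by
      have h := ZSym.swap_sub M' k (hatukEnds u' k)
      have he : (fun i : Fin k => (((hatukEnds u' k i).1.2, (hatukEnds u' k i).1.1),
          ((hatukEnds u' k i).2.2, (hatukEnds u' k i).2.1))) = ukEnds u k := by
        funext i; rfl
      have hMM : (fun q : ℤ × ℤ => M' (q.2, q.1)) = M := by funext q; rfl
      rw [he, hMM] at h
      exact h
    exact fun w hw => e3 (e2 (e1 hw))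
  exact congrArg sSup (Set.Subset.antisymm h1 h2)
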